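/- Let K be a field of characteristic p > 3. With λ_{ij} = Σ_{k=1}^{i} binom(i+j+1−k, j+1)·(k+2)·(k(k+1))^{−1} ∈ K, one has λ_{ij} = (−1)^j (2j+1)·(j(j+1))^{−1} for all integers i, j ≥ 1 with i + j = p − 1; moreover λ_{p−2,0} = 0. -/

import Mathlib

/-!
STATEMENT 13: char K = p > 3; with λ_{ij} = Σ_{k=1}^{i} binom(i+j+1−k, j+1)·(k+2)·(k(k+1))⁻¹
in K, one has λ_{ij} = (−1)^j (2j+1)·(j(j+1))⁻¹ for all i,j ≥ 1 with i+j = p−1;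
moreover λ_{p−2,0} = 0.
-/

/-- Binomial coefficient `binom a b` of integers, reduced into `K`
(zero when either argument is negative). -/
def chK (K : Type) [Field K] (a b : ℤ) : K :=
  if a < 0 ∨ b < 0 then 0 else ((a.toNat.choose b.toNat : ℕ) : K)

/-- The structure constants `N_{ij} = binom (i+j+1) j - binom (i+j+1) i`,
as elements of `K`. -/
def wittN (K : Type) [Field K] (i j : ℤ) : K :=
  chK K (i + j + 1) j - chK K (i + j + 1) i

/-- `λ_{ij} = Σ_{k=1}^{i} binom(i+j+1−k, j+1) · (k+2) · (k(k+1))⁻¹ ∈ K`. -/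
noncomputable def lamK (K : Type) [Field K] (i j : ℤ) : K :=
  ∑ k ∈ Finset.Icc (1 : ℤ) i,
    chK K (i + j + 1 - k) (j + 1) * ((k : K) + 2) * ((k : K) * ((k : K) + 1))⁻¹

lemma myCastNeZero (K : Type) [Field K] (p : ℕ) [CharP K p]
    {n : ℕ} (h0 : n ≠ 0) (h : n < p) : (n : K) ≠ 0 := by
  rw [Ne, CharP.cast_eq_zero_iff K p]
  intro hd
  exact absurd (Nat.le_of_dvd (Nat.pos_of_ne_zero h0) hd) (not_le.mpr h)

lemma mySign (K : Type) [Field K] (p : ℕ) [CharP K p] (hp : p.Prime)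
    (k : ℕ) (hk : 1 ≤ k) :
    ∀ r : ℕ, k + r ≤ p →
      (((p - k).choose r : ℕ) : K) = (-1) ^ r * (((k + r - 1).choose r : ℕ) : K) := by
  intro r
  induction r with
  | zero => simp
  | succ r ih =>
    intro hr
    have ih' := ih (by omega)
    have hru : ((r : K) + 1) ≠ 0 := by
      have := myCastNeZero K p (n := r + 1) (by omega) (by omega)
      push_cast at this; exact this
    have h1k : (((p - k).choose (r + 1) : ℕ) : K) * ((r : K) + 1)
        = (((p - k).choose r : ℕ) : K) * (-(k : K) - (r : K)) := by
      have h := Nat.choose_succ_right_eq (p - k) r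
      have hc : (((p - k - r : ℕ)) : K) = -(k : K) - (r : K) := by
        rw [Nat.cast_sub (by omega : r ≤ p - k), Nat.cast_sub (by omega : k ≤ p),
          CharP.cast_eq_zero K p]
        ring
      calc (((p - k).choose (r + 1) : ℕ) : K) * ((r : K) + 1)
          = (((p - k).choose (r + 1) * (r + 1) : ℕ) : K) := by push_cast; ring
        _ = (((p - k).choose r * (p - k - r) : ℕ) : K) := by rw [h]
        _ = (((p - k).choose r : ℕ) : K) * (-(k : K) - (r : K)) := by
            push_cast [hc]; ring
    have h2k : ((k : K) + (r : K)) * (((k + r - 1).choose r : ℕ) : K)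
        = (((k + r).choose (r + 1) : ℕ) : K) * ((r : K) + 1) := by
      have h := Nat.add_one_mul_choose_eq (k + r - 1) r
      have he : k + r - 1 + 1 = k + r := by omega
      rw [he] at h
      calc ((k : K) + (r : K)) * (((k + r - 1).choose r : ℕ) : K)
          = (((k + r) * (k + r - 1).choose r : ℕ) : K) := by push_cast; ring
        _ = (((k + r).choose (r + 1) * (r + 1) : ℕ) : K) := by rw [h]
        _ = (((k + r).choose (r + 1) : ℕ) : K) * ((r : K) + 1) := by push_cast; ring
    have he2 : k + (r + 1) - 1 = k + r := by omega
    rw [he2]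
    apply mul_right_cancel₀ hru
    linear_combination h1k + (-(k : K) - (r : K)) * ih' + (-1 : K) ^ (r + 1) * h2k

lemma myPartial (K : Type) [Field K] (p : ℕ) [CharP K p] (hp : p.Prime)
    (j : ℕ) (hj : 1 ≤ j) (hjp : j + 1 < p) :
    ∀ m : ℕ, m + 1 < p →
      ∑ k ∈ Finset.Icc 1 m, (((k + j).choose (j + 1) : ℕ) : K) * ((k : K) + 2)
          * ((k : K) * ((k : K) + 1))⁻¹
        = ((((m + j + 1).choose (j + 1) : ℕ) : K) - 1) * ((j : K) + 1)⁻¹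
          + ((((m + j + 1).choose j : ℕ) : K) - ((j : K) + 1)) * ((j : K) * ((j : K) + 1))⁻¹ := by
  intro m
  induction m with
  | zero =>
    intro _
    obtain ⟨j', rfl⟩ : ∃ j', j = j' + 1 := ⟨j - 1, by omega⟩
    simp [Nat.choose_self, Nat.choose_succ_self_right]
  | succ m ih =>
    intro hm
    have ihm := ih (by omega)
    have hm1 : ((m : K) + 1) ≠ 0 := by
      have := myCastNeZero K p (n := m + 1) (by omega) (by omega); push_cast at this; exact this
    have hm2 : ((m : K) + 2) ≠ 0 := by
      have := myCastNeZero K p (n := m + 2) (by omega) (by omega); push_cast at this; exact this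
    have hjK0 : ((j : K)) ≠ 0 := myCastNeZero K p (by omega) (by omega)
    have hjK : ((j : K) + 1) ≠ 0 := by
      have := myCastNeZero K p (n := j + 1) (by omega) (by omega); push_cast at this; exact this
    have e1 : (((m + j + 1).choose (j + 1) : ℕ) : K) * ((j : K) + 1)
        = (((m + j + 1).choose j : ℕ) : K) * ((m : K) + 1) := by
      have h := Nat.choose_succ_right_eq (m + j + 1) j
      have hs : m + j + 1 - j = m + 1 := by omega
      rw [hs] at h
      calc (((m + j + 1).choose (j + 1) : ℕ) : K) * ((j : K) + 1)
          = (((m + j + 1).choose (j + 1) * (j + 1) : ℕ) : K) := by push_cast; ring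
        _ = (((m + j + 1).choose j * (m + 1) : ℕ) : K) := by rw [h]
        _ = (((m + j + 1).choose j : ℕ) : K) * ((m : K) + 1) := by push_cast; ring
    have e2 : (((m + j + 1).choose j : ℕ) : K) * (j : K)
        = (((m + j + 1).choose (j - 1) : ℕ) : K) * ((m : K) + 2) := by
      have h := Nat.choose_succ_right_eq (m + j + 1) (j - 1)
      have hs : m + j + 1 - (j - 1) = m + 2 := by omega
      have hs2 : j - 1 + 1 = j := by omega
      rw [hs, hs2] at h
      calc (((m + j + 1).choose j : ℕ) : K) * (j : K)
          = (((m + j + 1).choose j * j : ℕ) : K) := by push_cast; ring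
        _ = (((m + j + 1).choose (j - 1) * (m + 2) : ℕ) : K) := by rw [h]
        _ = (((m + j + 1).choose (j - 1) : ℕ) : K) * ((m : K) + 2) := by push_cast; ring
    have P1 : (m + j + 1 + 1).choose (j + 1) = (m + j + 1).choose j + (m + j + 1).choose (j + 1) :=
      Nat.choose_succ_succ (m + j + 1) j
    have P2 : (m + j + 1 + 1).choose j = (m + j + 1).choose (j - 1) + (m + j + 1).choose j := by
      have h := Nat.choose_succ_succ (m + j + 1) (j - 1)
      have hs2 : j - 1 + 1 = j := by omega
      simpa only [Nat.succ_eq_add_one, hs2] using h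
    rw [Finset.sum_Icc_succ_top (by omega : 1 ≤ m + 1), ihm,
      show m + 1 + j = m + j + 1 from by omega]
    rw [P1, P2]
    push_cast
    set a := (((m + j + 1).choose (j + 1) : ℕ) : K) with ha
    set b := (((m + j + 1).choose j : ℕ) : K) with hb
    set c := (((m + j + 1).choose (j - 1) : ℕ) : K) with hc
    have key : a * ((m : K) + 3) * ((j : K) * ((j : K) + 1))
        = b * (j : K) * (((m : K) + 1) * ((m : K) + 2))
          + c * (((m : K) + 1) * ((m : K) + 2)) := by
      linear_combination ((m : K) + 3) * (j : K) * e1 + ((m : K) + 1) * e2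
    have main : a * ((m : K) + 3) * (((m : K) + 1) * ((m : K) + 2))⁻¹
        = b * ((j : K) + 1)⁻¹ + c * ((j : K) * ((j : K) + 1))⁻¹ := by
      field_simp
      linear_combination key
    linear_combination main

lemma mySumInt {M : Type} [AddCommMonoid M] (f : ℤ → M) (n : ℕ) :
    ∑ k ∈ Finset.Icc (1 : ℤ) (n : ℤ), f k = ∑ k ∈ Finset.Icc 1 n, f (k : ℤ) := by
  refine Finset.sum_nbij' (fun k => k.toNat) (fun k => (k : ℤ)) ?_ ?_ ?_ ?_ ?_
  · intro a ha; simp only [Finset.mem_Icc] at ha ⊢; omega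
  · intro a ha; simp only [Finset.mem_Icc] at ha ⊢; omega
  · intro a ha; simp only [Finset.mem_Icc] at ha; omega
  · intro a ha; simp only [Finset.mem_Icc] at ha; omega
  · intro a ha; simp only [Finset.mem_Icc] at ha
    congr 1; omega

lemma myHarmonic (K : Type) [Field K] (p : ℕ) [CharP K p] (hp3 : 3 < p) :
    ∑ k ∈ Finset.Icc 1 (p - 1), ((k : K))⁻¹ = 0 := by
  have h : ∑ k ∈ Finset.Icc 1 (p - 1), ((k : K))⁻¹
      = ∑ k ∈ Finset.Icc 1 (p - 1), -((k : K))⁻¹ := by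
    refine Finset.sum_nbij' (fun k => p - k) (fun k => p - k) ?_ ?_ ?_ ?_ ?_
    · intro a ha; simp only [Finset.mem_Icc] at ha ⊢; omega
    · intro a ha; simp only [Finset.mem_Icc] at ha ⊢; omega
    · intro a ha; simp only [Finset.mem_Icc] at ha; omega
    · intro a ha; simp only [Finset.mem_Icc] at ha; omega
    · intro a ha; simp only [Finset.mem_Icc] at ha
      have hc : ((p - a : ℕ) : K) = -(a : K) := by
        rw [Nat.cast_sub (by omega : a ≤ p), CharP.cast_eq_zero K p]; ring
      rw [hc, inv_neg, neg_neg]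
  rw [Finset.sum_neg_distrib] at h
  have h2 : (2 : K) * ∑ k ∈ Finset.Icc 1 (p - 1), ((k : K))⁻¹ = 0 := by
    linear_combination h
  have h2ne : (2 : K) ≠ 0 := by
    have : ((2 : ℕ) : K) ≠ 0 := by
      rw [Ne, CharP.cast_eq_zero_iff K p]
      intro hd; have := Nat.le_of_dvd (by norm_num) hd; omega
    simpa using this
  exact (mul_eq_zero.mp h2).resolve_left h2ne

theorem statement13
    (K : Type) [Field K] (p : ℕ) [CharP K p] (hp : 3 < p) :
    (∀ i j : ℤ, 1 ≤ i → 1 ≤ j → i + j = (p : ℤ) - 1 →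
      lamK K i j = (-1 : K) ^ j * (2 * (j : K) + 1) * ((j : K) * ((j : K) + 1))⁻¹) ∧
    lamK K ((p : ℤ) - 2) 0 = 0 := by
  haveI : NeZero p := ⟨by omega⟩
  have hprime : p.Prime := (CharP.char_is_prime_of_pos K p).1
  constructor
  · intro i j hi hj hsum
    obtain ⟨jn, rfl⟩ : ∃ n : ℕ, j = (n : ℤ) := ⟨j.toNat, by omega⟩
    obtain ⟨iN, rfl⟩ : ∃ n : ℕ, i = (n : ℤ) := ⟨i.toNat, by omega⟩
    have hjn : 1 ≤ jn := by exact_mod_cast hj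
    have hiN : 1 ≤ iN := by exact_mod_cast hi
    have hs : iN + jn + 1 = p := by omega
    unfold lamK
    rw [mySumInt]
    have hterm : ∀ k ∈ Finset.Icc 1 iN,
        chK K ((iN : ℤ) + (jn : ℤ) + 1 - (k : ℤ)) ((jn : ℤ) + 1) * (((k : ℤ) : K) + 2)
            * (((k : ℤ) : K) * (((k : ℤ) : K) + 1))⁻¹
          = (-1 : K) ^ (jn + 1) * ((((k + jn).choose (jn + 1) : ℕ) : K) * ((k : K) + 2)
              * ((k : K) * ((k : K) + 1))⁻¹) := by
      intro k hk
      simp only [Finset.mem_Icc] at hk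
      rw [chK, if_neg (by omega)]
      have h1 : ((iN : ℤ) + (jn : ℤ) + 1 - (k : ℤ)).toNat = p - k := by omega
      have h2 : ((jn : ℤ) + 1).toNat = jn + 1 := by omega
      rw [h1, h2, mySign K p hprime k hk.1 (jn + 1) (by omega),
        show k + (jn + 1) - 1 = k + jn from by omega]
      push_cast
      ring
    rw [Finset.sum_congr rfl hterm, ← Finset.mul_sum,
      myPartial K p hprime jn hjn (by omega) iN (by omega), hs]
    have hc1 : ((p.choose (jn + 1) : ℕ) : K) = 0 :=
      (CharP.cast_eq_zero_iff K p _).mpr (hprime.dvd_choose_self (by omega) (by omega))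
    have hc2 : ((p.choose jn : ℕ) : K) = 0 :=
      (CharP.cast_eq_zero_iff K p _).mpr (hprime.dvd_choose_self (by omega) (by omega))
    rw [hc1, hc2, zpow_natCast]
    have h1 : ((jn : K)) ≠ 0 := myCastNeZero K p (by omega) (by omega)
    have h2 : ((jn : K) + 1) ≠ 0 := by
      have := myCastNeZero K p (n := jn + 1) (by omega) (by omega); push_cast at this; exact this
    push_cast
    field_simp
    ring
  · have hi2 : ((p : ℤ) - 2) = ((p - 2 : ℕ) : ℤ) := by omega
    rw [hi2]
    unfold lamK
    rw [mySumInt]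
    have hterm : ∀ k ∈ Finset.Icc 1 (p - 2),
        chK K (((p - 2 : ℕ) : ℤ) + (0 : ℤ) + 1 - (k : ℤ)) ((0 : ℤ) + 1) * (((k : ℤ) : K) + 2)
            * (((k : ℤ) : K) * (((k : ℤ) : K) + 1))⁻¹
          = -1 + (-2) * ((k : K))⁻¹ := by
      intro k hk
      simp only [Finset.mem_Icc] at hk
      rw [chK, if_neg (by omega)]
      have h1 : (((p - 2 : ℕ) : ℤ) + (0 : ℤ) + 1 - (k : ℤ)).toNat = p - 1 - k := by omega
      have h2 : ((0 : ℤ) + 1).toNat = 1 := by omega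
      rw [h1, h2, Nat.choose_one_right]
      have hc : ((p - 1 - k : ℕ) : K) = -1 - (k : K) := by
        rw [Nat.cast_sub (by omega : k ≤ p - 1), Nat.cast_sub (by omega : 1 ≤ p),
          CharP.cast_eq_zero K p]
        push_cast; ring
      rw [hc]
      have hk0 : ((k : K)) ≠ 0 := myCastNeZero K p (by omega) (by omega)
      have hk1 : ((k : K) + 1) ≠ 0 := by
        have := myCastNeZero K p (n := k + 1) (by omega) (by omega); push_cast at this; exact this
      push_cast
      field_simp
      ring
    rw [Finset.sum_congr rfl hterm, Finset.sum_add_distrib, Finset.sum_const,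
      ← Finset.mul_sum, Nat.card_Icc]
    have hH : ∑ k ∈ Finset.Icc 1 (p - 2), ((k : K))⁻¹ = 1 := by
      have hsplit := Finset.sum_Icc_succ_top (f := fun k : ℕ => ((k : K))⁻¹)
        (by omega : 1 ≤ (p - 2) + 1)
      have hp1 : p - 2 + 1 = p - 1 := by omega
      rw [hp1] at hsplit
      have hH0 := myHarmonic K p hp
      rw [hsplit] at hH0
      have hc : ((p - 1 : ℕ) : K) = -1 := by
        rw [Nat.cast_sub (by omega : 1 ≤ p), CharP.cast_eq_zero K p]; ring
      rw [hc] at hH0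
      have : ((-1 : K))⁻¹ = -1 := by norm_num
      rw [this] at hH0
      linear_combination hH0
    rw [hH]
    have hcard : ((p - 2 + 1 - 1 : ℕ)) = p - 2 := by omega
    rw [hcard]
    have hc : ((p - 2 : ℕ) : K) = -2 := by
      rw [Nat.cast_sub (by omega : 2 ≤ p), CharP.cast_eq_zero K p]; push_cast; ring
    rw [nsmul_eq_mul, hc]
    ring
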